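/- In the graph G of Example 1 (parameters n ≥ t ≥ 4, r < r'): for any ordering σ of G with X <_σ Z <_σ Y, we have scol_{r'}(G,σ) ≤ 4n − 6. -/

import Mathlib

open SimpleGraph

/-- `y` is weakly `r`-reachable from `x` w.r.t. the ordering `le`:
`y ≤ x` and there is an `x,y`-path of length at most `r` all of whose
vertices `z` satisfy `y ≤ z`. -/
def wreach {V : Type*} (G : SimpleGraph V) (le : V → V → Prop) (r : ℕ) (x : V) : Set V :=
  {y | le y x ∧ ∃ p : G.Walk x y, p.IsPath ∧ p.length ≤ r ∧ ∀ z ∈ p.support, le y z}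

/-- `y` is strongly `r`-reachable from `x` w.r.t. the ordering `le`:
`y ≤ x` and there is an `x,y`-path of length at most `r` all of whose
vertices `z ≠ y` satisfy `x ≤ z`. -/
def sreach {V : Type*} (G : SimpleGraph V) (le : V → V → Prop) (r : ℕ) (x : V) : Set V :=
  {y | le y x ∧ ∃ p : G.Walk x y, p.IsPath ∧ p.length ≤ r ∧ ∀ z ∈ p.support, z ≠ y → le x z}

/-- `wcol_r(G, σ)`. -/
noncomputable def wcolOn {V : Type*} [Fintype V] (G : SimpleGraph V)
    (le : V → V → Prop) (r : ℕ) : ℕ :=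
  Finset.univ.sup fun x => Nat.card (wreach G le r x)

/-- `scol_r(G, σ)`. -/
noncomputable def scolOn {V : Type*} [Fintype V] (G : SimpleGraph V)
    (le : V → V → Prop) (r : ℕ) : ℕ :=
  Finset.univ.sup fun x => Nat.card (sreach G le r x)

/-- The weak `r`-coloring number. -/
noncomputable def wcol {V : Type*} [Fintype V] (G : SimpleGraph V) (r : ℕ) : ℕ :=
  ⨅ σ : LinearOrder V, wcolOn G σ.le r

/-- The strong `r`-coloring number. -/
noncomputable def scol {V : Type*} [Fintype V] (G : SimpleGraph V) (r : ℕ) : ℕ :=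
  ⨅ σ : LinearOrder V, scolOn G σ.le r

/-- `col(G, σ)`: one more than the max back-degree. -/
noncomputable def colOn {V : Type*} [Fintype V] (G : SimpleGraph V)
    (lt : V → V → Prop) : ℕ :=
  Finset.univ.sup fun x => 1 + Nat.card {y | G.Adj x y ∧ lt y x}

/-- The coloring number `col(G)`. -/
noncomputable def col {V : Type*} [Fintype V] (G : SimpleGraph V) : ℕ :=
  ⨅ σ : LinearOrder V, colOn G σ.lt


/-! ### The graph of Example 1. -/

/-- Ordered pairs `(i,j)` with `i ≠ j`. -/
abbrev Idx (n : ℕ) := {p : Fin n × Fin n // p.1 ≠ p.2}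

/-- Vertex set of Example 1: `Z ⊕ (X ⊕ (Y_P ⊕ Y_Q))`, where `Y_P` (resp. `Y_Q`)
are the internal vertices of the paths `P^h_{i,j}` (resp. `Q^h_{i,j}`). -/
abbrev ExV (n t r r' : ℕ) : Type :=
  (Fin n × Fin t) ⊕ (Idx n ⊕ ((Idx n × Fin t × Fin (r - 1)) ⊕ (Idx n × Fin t × Fin (r' - r - 1))))

variable (n t r r' : ℕ)

def zV (i : Fin n) (h : Fin t) : ExV n t r r' := Sum.inl (i, h)
def xV (p : Idx n) : ExV n t r r' := Sum.inr (Sum.inl p)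
def pIn (p : Idx n) (h : Fin t) (k : Fin (r - 1)) : ExV n t r r' :=
  Sum.inr (Sum.inr (Sum.inl (p, h, k)))
def qIn (p : Idx n) (h : Fin t) (k : Fin (r' - r - 1)) : ExV n t r r' :=
  Sum.inr (Sum.inr (Sum.inr (p, h, k)))

/-- The `k`-th vertex of the path `P^h_{i,j}` (of length `r`, from `z_i^h` to `x_{i,j}`). -/
def pv (p : Idx n) (h : Fin t) (k : ℕ) : ExV n t r r' :=
  if h0 : k = 0 then zV n t r r' p.1.1 h
  else if hk : k < r then pIn n t r r' p h ⟨k - 1, by omega⟩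
  else xV n t r r' p

/-- The `k`-th vertex of the path `Q^h_{i,j}` (of length `r' - r`, from `x_{i,j}` to `z_j^h`). -/
def qv (p : Idx n) (h : Fin t) (k : ℕ) : ExV n t r r' :=
  if h0 : k = 0 then xV n t r r' p
  else if hk : k < r' - r then qIn n t r r' p h ⟨k - 1, by omega⟩
  else zV n t r r' p.1.2 h

/-- The graph of Example 1: the union of all the paths `P^h_{i,j}` and `Q^h_{i,j}`. -/
def ExG : SimpleGraph (ExV n t r r') :=
  SimpleGraph.fromRel fun u v => ∃ (p : Idx n) (h : Fin t) (k : ℕ),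
    (k < r ∧ pv n t r r' p h k = u ∧ pv n t r r' p h (k + 1) = v) ∨
    (k < r' - r ∧ qv n t r r' p h k = u ∧ qv n t r r' p h (k + 1) = v)

section Helpers
variable {V : Type*} {G : SimpleGraph V}

lemma path_loop_support {a : V} (w : G.Walk a a) (hw : w.IsPath) : ∀ v ∈ w.support, v = a := by
  cases w with
  | nil => simp
  | cons h w' =>
    exfalso
    have := hw.support_nodup
    simp only [Walk.support_cons, List.nodup_cons] at this
    exact this.1 (w'.end_mem_support)

lemma walk_confine (A B : Set V) (hAB : ∀ a ∈ A, ∀ b, G.Adj a b → b ∈ A ∪ B)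
    {u y : V} (w : G.Walk u y) (hw : w.IsPath) (hu : u ∈ A)
    (hsup : ∀ v ∈ w.support, v ≠ y → v ∉ B) :
    ∀ v ∈ w.support, v ∈ A ∪ B := by
  induction w with
  | nil => intro v hv; simp at hv; subst hv; exact Or.inl hu
  | @cons a b y h w' ih =>
    intro v hv
    simp only [Walk.support_cons, List.mem_cons] at hv
    rcases hv with rfl | hv
    · exact Or.inl hu
    · rcases hAB a hu b h with hbA | hbB
      · exact ih hw.of_cons hbA (fun z hz hzy => hsup z (by simp [hz]) hzy) v hv
      · by_cases hby : b = y
        · subst hby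
          have := path_loop_support w' hw.of_cons v hv
          subst this; exact Or.inr hbB
        · exact absurd hbB (hsup b (by simp) hby)

lemma lip_walk (f : V → ℕ) (hf : ∀ a b, G.Adj a b → f b ≤ f a + 1) {u y : V} (w : G.Walk u y) :
    f y ≤ f u + w.length := by
  induction w with
  | nil => simp
  | @cons a b y h w' ih =>
    have := hf a b h
    simp only [Walk.length_cons]
    omega

lemma ivt_up (f : V → ℕ) {u y : V} (w : G.Walk u y)
    (hf : ∀ d ∈ w.darts, f d.toProd.2 ≤ f d.toProd.1 + 1)
    (c : ℕ) (h1 : f u ≤ c) (h2 : c ≤ f y) : ∃ v ∈ w.support, f v = c := by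
  induction w with
  | nil =>
    rename_i u0
    exact ⟨u0, by simp, by omega⟩
  | @cons a b y h w' ih =>
    have hd : f b ≤ f a + 1 := hf ⟨(a, b), h⟩ (by simp [Walk.darts_cons])
    by_cases hc : f b ≤ c
    · obtain ⟨v, hv, hfv⟩ := ih (fun d hd' => hf d (by simp [Walk.darts_cons, hd'])) hc h2
      exact ⟨v, by simp [hv], hfv⟩
    · exact ⟨a, by simp, by omega⟩

lemma ivt_down (f : V → ℕ) {u y : V} (w : G.Walk u y)
    (hf : ∀ d ∈ w.darts, f d.toProd.1 ≤ f d.toProd.2 + 1)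
    (c : ℕ) (h1 : f y ≤ c) (h2 : c ≤ f u) : ∃ v ∈ w.support, f v = c := by
  induction w with
  | nil =>
    rename_i u0
    exact ⟨u0, by simp, by omega⟩
  | @cons a b y h w' ih =>
    have hd : f a ≤ f b + 1 := hf ⟨(a, b), h⟩ (by simp [Walk.darts_cons])
    by_cases hc : c ≤ f b
    · obtain ⟨v, hv, hfv⟩ := ih (fun d hd' => hf d (by simp [Walk.darts_cons, hd'])) h1 hc
      exact ⟨v, by simp [hv], hfv⟩
    · exact ⟨a, by simp, by omega⟩

end Helpers

section Graph
variable {n t r r' : ℕ}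

lemma adj_class {u v : ExV n t r r'} (hadj : (ExG n t r r').Adj u v) :
    ∃ (p : Idx n) (h : Fin t) (k : ℕ),
      (k < r ∧ ((pv n t r r' p h k = u ∧ pv n t r r' p h (k+1) = v) ∨
                (pv n t r r' p h k = v ∧ pv n t r r' p h (k+1) = u))) ∨
      (k < r' - r ∧ ((qv n t r r' p h k = u ∧ qv n t r r' p h (k+1) = v) ∨
                (qv n t r r' p h k = v ∧ qv n t r r' p h (k+1) = u))) := by
  rw [ExG, fromRel_adj] at hadj
  obtain ⟨-, h | h⟩ := hadj <;> obtain ⟨p, h', k, hk⟩ := h <;> refine ⟨p, h', k, ?_⟩ <;> tauto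

lemma pv_zero (p : Idx n) (h : Fin t) : pv n t r r' p h 0 = zV n t r r' p.1.1 h := by
  simp [pv]

lemma pv_mid (p : Idx n) (h : Fin t) {k : ℕ} (hk0 : k ≠ 0) (hkr : k < r) :
    pv n t r r' p h k = pIn n t r r' p h ⟨k - 1, by omega⟩ := by
  simp [pv, hk0, hkr]

lemma pv_last (p : Idx n) (h : Fin t) {k : ℕ} (hk0 : k ≠ 0) (hkr : ¬ k < r) :
    pv n t r r' p h k = xV n t r r' p := by
  simp [pv, hk0, hkr]

lemma qv_zero (p : Idx n) (h : Fin t) : qv n t r r' p h 0 = xV n t r r' p := by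
  simp [qv]

lemma qv_mid (p : Idx n) (h : Fin t) {k : ℕ} (hk0 : k ≠ 0) (hkr : k < r' - r) :
    qv n t r r' p h k = qIn n t r r' p h ⟨k - 1, by omega⟩ := by
  simp [qv, hk0, hkr]

lemma qv_last (p : Idx n) (h : Fin t) {k : ℕ} (hk0 : k ≠ 0) (hkr : ¬ k < r' - r) :
    qv n t r r' p h k = zV n t r r' p.1.2 h := by
  simp [qv, hk0, hkr]

end Graph

section Xcase
variable {n t r r' : ℕ}

def gz (r r' : ℕ) {n : ℕ} (i j a : Fin n) : ℕ :=
  if a = i then r else if a = j then r' - r else r' + min r (r' - r)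

def fxP (r r' : ℕ) {n : ℕ} (i j : Fin n) (p : Idx n) : ℕ :=
  if p.1 = (i, j) then 0
  else min (gz r r' i j p.1.1 + r) (gz r r' i j p.1.2 + (r' - r))

variable {i j : Fin n} (hr : 1 ≤ r) (hrr' : r < r') (hij : i ≠ j)

include hr hrr' hij in
lemma gz_le_gz (a b : Fin n) : gz r r' i j a ≤ gz r r' i j b + r' := by
  simp only [gz]; split_ifs <;> omega

include hr hrr' hij in
lemma fxP_le_left (p : Idx n) : fxP r r' i j p ≤ gz r r' i j p.1.1 + r := by
  simp only [fxP]; split_ifs with h1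
  · omega
  · exact le_trans (min_le_left _ _) (le_refl _)

include hr hrr' hij in
lemma fxP_le_right (p : Idx n) : fxP r r' i j p ≤ gz r r' i j p.1.2 + (r' - r) := by
  simp only [fxP]; split_ifs with h1
  · omega
  · exact min_le_right _ _

include hr hrr' hij in
lemma gz_le_fxP_left (p : Idx n) : gz r r' i j p.1.1 ≤ fxP r r' i j p + r := by
  have h2 : gz r r' i j p.1.1 ≤ gz r r' i j p.1.2 + r' := by
    simp only [gz]; split_ifs <;> omega
  simp only [fxP]; split_ifs with h1
  · have e1 : p.1.1 = i := by rw [h1]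
    simp [gz, e1]
  · omega

include hr hrr' hij in
lemma gz_le_fxP_right (p : Idx n) : gz r r' i j p.1.2 ≤ fxP r r' i j p + (r' - r) := by
  have h2 : gz r r' i j p.1.2 ≤ gz r r' i j p.1.1 + r' := by
    simp only [gz]; split_ifs <;> omega
  simp only [fxP]; split_ifs with h1
  · have e2 : p.1.2 = j := by rw [h1]
    have e3 : p.1.2 ≠ i := by rw [e2]; exact fun hh => hij hh.symm
    simp [gz, e2, Ne.symm hij]
  · omega

def fX (n t r r' : ℕ) (i j : Fin n) : ExV n t r r' → ℕ
  | Sum.inl (a, _) => gz r r' i j a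
  | Sum.inr (Sum.inl p) => fxP r r' i j p
  | Sum.inr (Sum.inr (Sum.inl (p, _, c))) =>
      min (gz r r' i j p.1.1 + (c.val + 1)) (fxP r r' i j p + (r - (c.val + 1)))
  | Sum.inr (Sum.inr (Sum.inr (p, _, c))) =>
      min (fxP r r' i j p + (c.val + 1)) (gz r r' i j p.1.2 + (r' - r - (c.val + 1)))

include hr hrr' hij in
lemma fX_pv (p : Idx n) (h : Fin t) {k : ℕ} (hk : k ≤ r) :
    fX n t r r' i j (pv n t r r' p h k) =
      min (gz r r' i j p.1.1 + k) (fxP r r' i j p + (r - k)) := by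
  rcases eq_or_ne k 0 with rfl | h0
  · rw [pv_zero]
    show gz r r' i j p.1.1 = _
    have h1 := gz_le_fxP_left hr hrr' hij p
    omega
  · rcases lt_or_eq_of_le hk with hkr | hke
    · rw [pv_mid p h h0 hkr]
      show min (gz r r' i j p.1.1 + (k - 1 + 1)) (fxP r r' i j p + (r - (k - 1 + 1))) = _
      omega
    · rw [pv_last p h h0 (by omega)]
      show fxP r r' i j p = _
      have h1 := fxP_le_left hr hrr' hij p
      omega

include hr hrr' hij in
lemma fX_qv (p : Idx n) (h : Fin t) {k : ℕ} (hk : k ≤ r' - r) :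
    fX n t r r' i j (qv n t r r' p h k) =
      min (fxP r r' i j p + k) (gz r r' i j p.1.2 + (r' - r - k)) := by
  rcases eq_or_ne k 0 with rfl | h0
  · rw [qv_zero]
    show fxP r r' i j p = _
    have h1 := fxP_le_right hr hrr' hij p
    omega
  · rcases lt_or_eq_of_le hk with hkr | hke
    · rw [qv_mid p h h0 hkr]
      show min (fxP r r' i j p + (k - 1 + 1)) (gz r r' i j p.1.2 + (r' - r - (k - 1 + 1))) = _
      omega
    · rw [qv_last p h h0 (by omega)]
      show gz r r' i j p.1.2 = _
      have h1 := gz_le_fxP_right hr hrr' hij p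
      omega

include hr hrr' hij in
lemma fX_lip {u v : ExV n t r r'} (hadj : (ExG n t r r').Adj u v) :
    fX n t r r' i j v ≤ fX n t r r' i j u + 1 := by
  obtain ⟨p, h, k, hc⟩ := adj_class hadj
  rcases hc with ⟨hk, hc⟩ | ⟨hk, hc⟩
  · have e1 := fX_pv (t := t) hr hrr' hij p h (k := k) (by omega)
    have e2 := fX_pv (t := t) hr hrr' hij p h (k := k + 1) (by omega)
    rcases hc with ⟨rfl, rfl⟩ | ⟨rfl, rfl⟩ <;> omega
  · have e1 := fX_qv (t := t) hr hrr' hij p h (k := k) (by omega)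
    have e2 := fX_qv (t := t) hr hrr' hij p h (k := k + 1) (by omega)
    rcases hc with ⟨rfl, rfl⟩ | ⟨rfl, rfl⟩ <;> omega

include hr hrr' hij in
lemma fxP_far (p : Idx n) (h1 : p.1.1 ≠ i) (h2 : p.1.1 ≠ j) (h3 : p.1.2 ≠ i)
    (h4 : p.1.2 ≠ j) : r' + 1 ≤ fxP r r' i j p := by
  have hne : p.1 ≠ (i, j) := by
    intro hh; exact h1 (by rw [hh])
  simp only [fxP, if_neg hne, gz, if_neg h1, if_neg h2, if_neg h3, if_neg h4]
  omega

end Xcase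

section Shapes
variable {n t r r' : ℕ} {p p' : Idx n} {h h' : Fin t} {k : ℕ} {i' : Fin n}

lemma pv_eq_zV_iff (hk : k ≤ r) :
    pv n t r r' p h k = zV n t r r' i' h' ↔ k = 0 ∧ p.1.1 = i' ∧ h = h' := by
  rcases eq_or_ne k 0 with rfl | h0
  · rw [pv_zero]; simp [zV]
  · rcases lt_or_eq_of_le hk with hkr | hke
    · rw [pv_mid p h h0 hkr]; exact iff_of_false (by simp [pIn, zV]) (by omega)
    · rw [pv_last p h h0 (by omega)]; exact iff_of_false (by simp [xV, zV]) (by omega)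

lemma pv_eq_xV_iff (hk : k ≤ r) (hr : 1 ≤ r) :
    pv n t r r' p h k = xV n t r r' p' ↔ k = r ∧ p = p' := by
  rcases eq_or_ne k 0 with rfl | h0
  · rw [pv_zero]; exact iff_of_false (by simp [xV, zV]) (by omega)
  · rcases lt_or_eq_of_le hk with hkr | hke
    · rw [pv_mid p h h0 hkr]; exact iff_of_false (by simp [pIn, xV]) (by omega)
    · rw [pv_last p h h0 (by omega)]; simp [xV, hke]

lemma pv_eq_pIn_iff (hk : k ≤ r) {c : Fin (r - 1)} :
    pv n t r r' p h k = pIn n t r r' p' h' c ↔ p = p' ∧ h = h' ∧ k = c.val + 1 := by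
  have hc := c.2
  rcases eq_or_ne k 0 with rfl | h0
  · rw [pv_zero]; exact iff_of_false (by simp [pIn, zV]) (by omega)
  · rcases lt_or_eq_of_le hk with hkr | hke
    · rw [pv_mid p h h0 hkr]; simp [pIn, Fin.ext_iff]; intro _ _; omega
    · rw [pv_last p h h0 (by omega)]; exact iff_of_false (by simp [pIn, xV]) (by omega)

lemma pv_eq_qIn_iff (hk : k ≤ r) {c : Fin (r' - r - 1)} :
    pv n t r r' p h k = qIn n t r r' p' h' c ↔ False := by
  rcases eq_or_ne k 0 with rfl | h0
  · rw [pv_zero]; simp [qIn, zV]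
  · rcases lt_or_eq_of_le hk with hkr | hke
    · rw [pv_mid p h h0 hkr]; simp [pIn, qIn]
    · rw [pv_last p h h0 (by omega)]; simp [qIn, xV]

lemma qv_eq_xV_iff (hk : k ≤ r' - r) (hrr : 1 ≤ r' - r) :
    qv n t r r' p h k = xV n t r r' p' ↔ k = 0 ∧ p = p' := by
  rcases eq_or_ne k 0 with rfl | h0
  · rw [qv_zero]; simp [xV]
  · rcases lt_or_eq_of_le hk with hkr | hke
    · rw [qv_mid p h h0 hkr]; exact iff_of_false (by simp [qIn, xV]) (by omega)
    · rw [qv_last p h h0 (by omega)]; exact iff_of_false (by simp [zV, xV]) (by omega)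

lemma qv_eq_zV_iff (hk : k ≤ r' - r) (hrr : 1 ≤ r' - r) :
    qv n t r r' p h k = zV n t r r' i' h' ↔ k = r' - r ∧ p.1.2 = i' ∧ h = h' := by
  rcases eq_or_ne k 0 with rfl | h0
  · rw [qv_zero]
    exact iff_of_false (by simp [xV, zV]) (by omega)
  · rcases lt_or_eq_of_le hk with hkr | hke
    · rw [qv_mid p h h0 hkr]; exact iff_of_false (by simp [qIn, zV]) (by omega)
    · rw [qv_last p h h0 (by omega)]; simp [zV, hke]

lemma qv_eq_qIn_iff (hk : k ≤ r' - r) {c : Fin (r' - r - 1)} :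
    qv n t r r' p h k = qIn n t r r' p' h' c ↔ p = p' ∧ h = h' ∧ k = c.val + 1 := by
  have hc := c.2
  rcases eq_or_ne k 0 with rfl | h0
  · rw [qv_zero]; exact iff_of_false (by simp [qIn, xV]) (by omega)
  · rcases lt_or_eq_of_le hk with hkr | hke
    · rw [qv_mid p h h0 hkr]; simp [qIn, Fin.ext_iff]; intro _ _; omega
    · rw [qv_last p h h0 (by omega)]; exact iff_of_false (by simp [qIn, zV]) (by omega)

lemma qv_eq_pIn_iff (hk : k ≤ r' - r) {c : Fin (r - 1)} :
    qv n t r r' p h k = pIn n t r r' p' h' c ↔ False := by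
  rcases eq_or_ne k 0 with rfl | h0
  · rw [qv_zero]; simp [pIn, xV]
  · rcases lt_or_eq_of_le hk with hkr | hke
    · rw [qv_mid p h h0 hkr]; simp [pIn, qIn]
    · rw [qv_last p h h0 (by omega)]; simp [pIn, zV]

end Shapes

section Nbrs
variable {n t r r' : ℕ} {p0 : Idx n} {h0 : Fin t} {i : Fin n} {b : ExV n t r r'}

lemma zV_nbr (hr : 1 ≤ r) (hrr : r < r') (hadj : (ExG n t r r').Adj (zV n t r r' i h0) b) :
    ∃ p : Idx n, (p.1.1 = i ∧ b = pv n t r r' p h0 1) ∨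
      (p.1.2 = i ∧ b = qv n t r r' p h0 (r' - r - 1)) := by
  obtain ⟨p, h, k, hc⟩ := adj_class hadj
  refine ⟨p, ?_⟩
  rcases hc with ⟨hk, hc | hc⟩ | ⟨hk, hc | hc⟩
  · obtain ⟨h1, h2⟩ := hc
    rw [pv_eq_zV_iff (by omega)] at h1
    obtain ⟨rfl, rfl, rfl⟩ := h1
    exact Or.inl ⟨rfl, h2.symm⟩
  · obtain ⟨h1, h2⟩ := hc
    rw [pv_eq_zV_iff (by omega)] at h2
    omega
  · obtain ⟨h1, h2⟩ := hc
    rw [qv_eq_zV_iff (by omega) (by omega)] at h1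
    omega
  · obtain ⟨h1, h2⟩ := hc
    rw [qv_eq_zV_iff (by omega) (by omega)] at h2
    obtain ⟨he, hp2, rfl⟩ := h2
    refine Or.inr ⟨hp2, ?_⟩
    rw [← h1]; congr 1; omega

lemma pIn_nbr {c : Fin (r - 1)} (hr : 1 ≤ r) (hrr : r < r')
    (hadj : (ExG n t r r').Adj (pIn n t r r' p0 h0 c) b) :
    b = pv n t r r' p0 h0 c.val ∨ b = pv n t r r' p0 h0 (c.val + 2) := by
  have hc2 := c.2
  obtain ⟨p, h, k, hc⟩ := adj_class hadj
  rcases hc with ⟨hk, hc | hc⟩ | ⟨hk, hc | hc⟩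
  · obtain ⟨h1, h2⟩ := hc
    rw [pv_eq_pIn_iff (by omega)] at h1
    obtain ⟨rfl, rfl, rfl⟩ := h1
    exact Or.inr h2.symm
  · obtain ⟨h1, h2⟩ := hc
    rw [pv_eq_pIn_iff (by omega)] at h2
    obtain ⟨rfl, rfl, hke⟩ := h2
    left; rw [← h1]; congr 1; omega
  · obtain ⟨h1, h2⟩ := hc
    rw [qv_eq_pIn_iff (by omega)] at h1
    exact h1.elim
  · obtain ⟨h1, h2⟩ := hc
    rw [qv_eq_pIn_iff (by omega)] at h2
    exact h2.elim

lemma qIn_nbr {c : Fin (r' - r - 1)} (hr : 1 ≤ r) (hrr : r < r')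
    (hadj : (ExG n t r r').Adj (qIn n t r r' p0 h0 c) b) :
    b = qv n t r r' p0 h0 c.val ∨ b = qv n t r r' p0 h0 (c.val + 2) := by
  have hc2 := c.2
  obtain ⟨p, h, k, hc⟩ := adj_class hadj
  rcases hc with ⟨hk, hc | hc⟩ | ⟨hk, hc | hc⟩
  · obtain ⟨h1, h2⟩ := hc
    rw [pv_eq_qIn_iff (by omega)] at h1
    exact h1.elim
  · obtain ⟨h1, h2⟩ := hc
    rw [pv_eq_qIn_iff (by omega)] at h2
    exact h2.elim
  · obtain ⟨h1, h2⟩ := hc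
    rw [qv_eq_qIn_iff (by omega)] at h1
    obtain ⟨rfl, rfl, rfl⟩ := h1
    exact Or.inr h2.symm
  · obtain ⟨h1, h2⟩ := hc
    rw [qv_eq_qIn_iff (by omega)] at h2
    obtain ⟨rfl, rfl, hke⟩ := h2
    left; rw [← h1]; congr 1; omega

lemma pv_inj (hr : 1 ≤ r) {a b : ℕ} (ha : a ≤ r) (hb : b ≤ r)
    (he : pv n t r r' p0 h0 a = pv n t r r' p0 h0 b) : a = b := by
  rcases eq_or_ne a 0 with rfl | h0a
  · rw [pv_zero, eq_comm, pv_eq_zV_iff hb] at he; omega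
  · rcases lt_or_eq_of_le ha with har | hae
    · rw [pv_mid p0 h0 h0a har, eq_comm, pv_eq_pIn_iff hb] at he
      have h2 : b = a - 1 + 1 := he.2.2
      omega
    · rw [pv_last p0 h0 h0a (by omega), eq_comm, pv_eq_xV_iff hb hr] at he; omega

lemma qv_inj (hrr : 1 ≤ r' - r) {a b : ℕ} (ha : a ≤ r' - r) (hb : b ≤ r' - r)
    (he : qv n t r r' p0 h0 a = qv n t r r' p0 h0 b) : a = b := by
  rcases eq_or_ne a 0 with rfl | h0a
  · rw [qv_zero, eq_comm, qv_eq_xV_iff hb hrr] at he; omega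
  · rcases lt_or_eq_of_le ha with har | hae
    · rw [qv_mid p0 h0 h0a har, eq_comm, qv_eq_qIn_iff hb] at he
      have h2 : b = a - 1 + 1 := he.2.2
      omega
    · rw [qv_last p0 h0 h0a (by omega), eq_comm, qv_eq_zV_iff hb hrr] at he; omega

end Nbrs

section SegAdj
variable {n t r r' : ℕ} {p0 : Idx n} {h0 : Fin t}

lemma adj_pseg (hr : 1 ≤ r) (hrr : r < r') {a b : ℕ} (ha : a ≤ r) (hb : b ≤ r)
    (hadj : (ExG n t r r').Adj (pv n t r r' p0 h0 a) (pv n t r r' p0 h0 b)) :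
    b = a + 1 ∨ a = b + 1 := by
  have key : ∀ a b : ℕ, a ≤ r → b ≤ r →
      (∃ (p : Idx n) (h : Fin t) (k : ℕ),
        (k < r ∧ pv n t r r' p h k = pv n t r r' p0 h0 a ∧
          pv n t r r' p h (k+1) = pv n t r r' p0 h0 b) ∨
        (k < r' - r ∧ qv n t r r' p h k = pv n t r r' p0 h0 a ∧
          qv n t r r' p h (k+1) = pv n t r r' p0 h0 b)) → b = a + 1 := by
    intro a b ha hb hex
    obtain ⟨p, h, k, hc⟩ := hex
    rcases hc with ⟨hk, h1, h2⟩ | ⟨hk, h1, h2⟩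
    · rcases eq_or_ne a 0 with rfl | h0a
      · rw [pv_zero, pv_eq_zV_iff (by omega)] at h1
        obtain ⟨rfl, hp1, hh⟩ := h1
        rw [hh] at h2
        norm_num at h2
        rcases lt_or_eq_of_le (show 1 ≤ r by omega) with h1r | h1r
        · rw [pv_mid p h0 one_ne_zero h1r, eq_comm, pv_eq_pIn_iff hb] at h2
          have hb1 : b = 0 + 1 := by
            have := h2.2.2; simpa using this
          omega
        · rw [pv_last p h0 one_ne_zero (by omega), eq_comm, pv_eq_xV_iff hb hr] at h2
          omega
      · rcases lt_or_eq_of_le ha with har | hae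
        · rw [pv_mid p0 h0 h0a har, pv_eq_pIn_iff (by omega)] at h1
          obtain ⟨rfl, hh, hke⟩ := h1
          rw [hh] at h2
          have hke' : k = a - 1 + 1 := hke
          have := pv_inj hr (by omega) hb h2
          omega
        · rw [pv_last p0 h0 h0a (by omega), pv_eq_xV_iff (by omega) hr] at h1
          omega
    · rcases eq_or_ne a 0 with rfl | h0a
      · rw [pv_zero, qv_eq_zV_iff (by omega) (by omega)] at h1
        omega
      · rcases lt_or_eq_of_le ha with har | hae
        · rw [pv_mid p0 h0 h0a har, qv_eq_pIn_iff (by omega)] at h1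
          exact h1.elim
        · rw [pv_last p0 h0 h0a (by omega), qv_eq_xV_iff (by omega) (by omega)] at h1
          obtain ⟨rfl, hp⟩ := h1
          rw [hp] at h2
          norm_num at h2
          rcases lt_or_eq_of_le (show 1 ≤ r' - r by omega) with h1r | h1r
          · rw [qv_mid p0 h one_ne_zero h1r, eq_comm, pv_eq_qIn_iff hb] at h2
            exact h2.elim
          · rw [qv_last p0 h one_ne_zero (by omega), eq_comm, pv_eq_zV_iff hb] at h2
            exact absurd h2.2.1 p0.2
  obtain ⟨p, h, k, hc⟩ := adj_class hadj
  rcases hc with ⟨hk, hc | hc⟩ | ⟨hk, hc | hc⟩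
  · exact Or.inl (key a b ha hb ⟨p, h, k, Or.inl ⟨hk, hc.1, hc.2⟩⟩)
  · exact Or.inr (key b a hb ha ⟨p, h, k, Or.inl ⟨hk, hc.1, hc.2⟩⟩)
  · exact Or.inl (key a b ha hb ⟨p, h, k, Or.inr ⟨hk, hc.1, hc.2⟩⟩)
  · exact Or.inr (key b a hb ha ⟨p, h, k, Or.inr ⟨hk, hc.1, hc.2⟩⟩)

lemma adj_qseg (hr : 1 ≤ r) (hrr : r < r') {a b : ℕ} (ha : a ≤ r' - r) (hb : b ≤ r' - r)
    (hadj : (ExG n t r r').Adj (qv n t r r' p0 h0 a) (qv n t r r' p0 h0 b)) :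
    b = a + 1 ∨ a = b + 1 := by
  have key : ∀ a b : ℕ, a ≤ r' - r → b ≤ r' - r →
      (∃ (p : Idx n) (h : Fin t) (k : ℕ),
        (k < r ∧ pv n t r r' p h k = qv n t r r' p0 h0 a ∧
          pv n t r r' p h (k+1) = qv n t r r' p0 h0 b) ∨
        (k < r' - r ∧ qv n t r r' p h k = qv n t r r' p0 h0 a ∧
          qv n t r r' p h (k+1) = qv n t r r' p0 h0 b)) → b = a + 1 := by
    intro a b ha hb hex
    obtain ⟨p, h, k, hc⟩ := hex
    rcases hc with ⟨hk, h1, h2⟩ | ⟨hk, h1, h2⟩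
    · rcases eq_or_ne a 0 with rfl | h0a
      · rw [qv_zero, pv_eq_xV_iff (by omega) hr] at h1
        omega
      · rcases lt_or_eq_of_le ha with har | hae
        · rw [qv_mid p0 h0 h0a har, pv_eq_qIn_iff (by omega)] at h1
          exact h1.elim
        · rw [qv_last p0 h0 h0a (by omega), pv_eq_zV_iff (by omega)] at h1
          obtain ⟨rfl, hp1, hh⟩ := h1
          rw [hh] at h2
          norm_num at h2
          rcases lt_or_eq_of_le (show 1 ≤ r by omega) with h1r | h1r
          · rw [pv_mid p h0 one_ne_zero h1r, eq_comm, qv_eq_pIn_iff hb] at h2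
            exact h2.elim
          · rw [pv_last p h0 one_ne_zero (by omega), eq_comm, qv_eq_xV_iff hb (by omega)] at h2
            obtain ⟨hb', hp'⟩ := h2
            rw [hp'] at hp1
            exact absurd hp1 p.2
    · rcases eq_or_ne a 0 with rfl | h0a
      · rw [qv_zero, qv_eq_xV_iff (by omega) (by omega)] at h1
        obtain ⟨rfl, hp⟩ := h1
        rw [hp] at h2
        norm_num at h2
        rcases lt_or_eq_of_le (show 1 ≤ r' - r by omega) with h1r | h1r
        · rw [qv_mid p0 h one_ne_zero h1r, eq_comm, qv_eq_qIn_iff hb] at h2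
          have hb1 : b = 0 + 1 := by
            have := h2.2.2; simpa using this
          omega
        · rw [qv_last p0 h one_ne_zero (by omega), eq_comm, qv_eq_zV_iff hb (by omega)] at h2
          omega
      · rcases lt_or_eq_of_le ha with har | hae
        · rw [qv_mid p0 h0 h0a har, qv_eq_qIn_iff (by omega)] at h1
          obtain ⟨rfl, hh, hke⟩ := h1
          rw [hh] at h2
          have hke' : k = a - 1 + 1 := hke
          have := qv_inj (by omega) (by omega) hb h2
          omega
        · rw [qv_last p0 h0 h0a (by omega), qv_eq_zV_iff (by omega) (by omega)] at h1
          omega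
  obtain ⟨p, h, k, hc⟩ := adj_class hadj
  rcases hc with ⟨hk, hc | hc⟩ | ⟨hk, hc | hc⟩
  · exact Or.inl (key a b ha hb ⟨p, h, k, Or.inl ⟨hk, hc.1, hc.2⟩⟩)
  · exact Or.inr (key b a hb ha ⟨p, h, k, Or.inl ⟨hk, hc.1, hc.2⟩⟩)
  · exact Or.inl (key a b ha hb ⟨p, h, k, Or.inr ⟨hk, hc.1, hc.2⟩⟩)
  · exact Or.inr (key b a hb ha ⟨p, h, k, Or.inr ⟨hk, hc.1, hc.2⟩⟩)

end SegAdj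

section Seg
open Classical in
noncomputable def idxOf {V : Type*} (sv : ℕ → V) (L : ℕ) (v : V) : ℕ :=
  if h : ∃ k, k ≤ L ∧ v = sv k then h.choose else L + 1

lemma idxOf_spec {V : Type*} (sv : ℕ → V) (L : ℕ) (v : V)
    (hv : ∃ k, k ≤ L ∧ v = sv k) : idxOf sv L v ≤ L ∧ v = sv (idxOf sv L v) := by
  unfold idxOf
  rw [dif_pos hv]
  exact hv.choose_spec

lemma sreach_seg {n t r r' : ℕ}
    (σ : LinearOrder (ExV n t r r')) (sv : ℕ → ExV n t r r') (L a : ℕ)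
    (ha0 : 0 < a) (haL : a < L)
    (hinj : ∀ k l, k ≤ L → l ≤ L → sv k = sv l → k = l)
    (hadjseg : ∀ k l, k ≤ L → l ≤ L → (ExG n t r r').Adj (sv k) (sv l) → l = k + 1 ∨ k = l + 1)
    (hnbr : ∀ k, 0 < k → k < L → ∀ b, (ExG n t r r').Adj (sv k) b → b = sv (k - 1) ∨ b = sv (k + 1))
    (hend0 : σ.lt (sv 0) (sv a)) (hendL : σ.lt (sv L) (sv a)) :
    Nat.card (sreach (ExG n t r r') σ.le r' (sv a)) ≤ 3 := by
  classical
  have hanti : ∀ {u v : ExV n t r r'}, σ.le u v → σ.le v u → u = v :=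
    fun h1 h2 => σ.le_antisymm _ _ h1 h2
  have hnotle : ∀ {u v : ExV n t r r'}, σ.lt u v → ¬ σ.le v u :=
    fun h => ((σ.lt_iff_le_not_ge _ _).mp h).2
  set f := idxOf sv L with hfdef
  have hf : ∀ k, k ≤ L → f (sv k) = k := by
    intro k hk
    obtain ⟨h1, h2⟩ := idxOf_spec sv L (sv k) ⟨k, hk, rfl⟩
    exact hinj _ _ h1 hk h2.symm
  -- confinement of supports
  have conf : ∀ y (w : (ExG n t r r').Walk (sv a) y), w.IsPath →
      (∀ z ∈ w.support, z ≠ y → σ.le (sv a) z) →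
      (∀ v ∈ w.support, ∃ k, k ≤ L ∧ v = sv k) := by
    intro y w hw hsup
    have hAB : ∀ a' ∈ {v : ExV n t r r' | ∃ k, 0 < k ∧ k < L ∧ v = sv k}, ∀ b,
        (ExG n t r r').Adj a' b → b ∈ {v : ExV n t r r' | ∃ k, 0 < k ∧ k < L ∧ v = sv k} ∪
          {v | v = sv 0 ∨ v = sv L} := by
      rintro a' ⟨k, hk0, hkL, rfl⟩ b hadj
      rcases hnbr k hk0 hkL b hadj with rfl | rfl
      · rcases eq_or_ne (k - 1) 0 with he | he
        · exact Or.inr (Or.inl (by rw [he]))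
        · exact Or.inl ⟨k - 1, by omega, by omega, rfl⟩
      · rcases eq_or_ne (k + 1) L with he | he
        · exact Or.inr (Or.inr (by rw [he]))
        · exact Or.inl ⟨k + 1, by omega, by omega, rfl⟩
    have := walk_confine _ _ hAB w hw ⟨a, ha0, haL, rfl⟩ ?_
    · intro v hv
      rcases this v hv with ⟨k, h1, h2, h3⟩ | (h | h)
      · exact ⟨k, by omega, h3⟩
      · exact ⟨0, by omega, h⟩
      · exact ⟨L, by omega, h⟩
    · intro v hv hvy hvB
      rcases hvB with rfl | rfl
      · exact hnotle hend0 (hsup _ hv hvy)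
      · exact hnotle hendL (hsup _ hv hvy)
  -- dart Lipschitz
  have dartlip : ∀ y (w : (ExG n t r r').Walk (sv a) y),
      (∀ v ∈ w.support, ∃ k, k ≤ L ∧ v = sv k) →
      ∀ d ∈ w.darts, f d.toProd.2 ≤ f d.toProd.1 + 1 ∧ f d.toProd.1 ≤ f d.toProd.2 + 1 := by
    intro y w hrep d hd
    obtain ⟨k1, hk1, he1⟩ := hrep _ (Walk.dart_fst_mem_support_of_mem_darts w hd)
    obtain ⟨k2, hk2, he2⟩ := hrep _ (Walk.dart_snd_mem_support_of_mem_darts w hd)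
    have hadj := d.adj
    rw [he1, he2] at hadj ⊢
    rw [hf _ hk1, hf _ hk2]
    rcases hadjseg _ _ hk1 hk2 hadj with h | h <;> omega
  -- the crossing argument
  have cross : ∀ y1 ∈ sreach (ExG n t r r') σ.le r' (sv a),
      ∀ y2 ∈ sreach (ExG n t r r') σ.le r' (sv a), ∀ k1 k2, k1 ≤ L → k2 ≤ L →
      y1 = sv k1 → y2 = sv k2 →
      ((k1 < k2 ∧ k2 < a) ∨ (a < k1 ∧ k1 < k2)) → False := by
    intro y1 hy1 y2 hy2 k1 k2 hk1 hk2 he1 he2 hcase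
    obtain ⟨hle2, w2, hw2, hlen2, hsup2⟩ := hy2
    obtain ⟨hle1, w1, hw1, hlen1, hsup1⟩ := hy1
    rcases hcase with ⟨h12, h2a⟩ | ⟨ha1, h12⟩
    · -- k1 < k2 < a : walk w1 (to sv k1) passes sv k2 = y2
      have hrep := conf _ w1 hw1 hsup1
      obtain ⟨v, hv, hfv⟩ := ivt_down f w1 (fun d hd => (dartlip _ w1 hrep d hd).2) k2
        (by rw [he1, hf _ hk1]; omega) (by rw [hf _ (by omega : a ≤ L)]; omega)
      obtain ⟨kv, hkv, rfl⟩ := hrep v hv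
      rw [hf _ hkv] at hfv
      rw [hfv] at hv
      have hvy1 : sv k2 ≠ y1 := by
        rw [he1]; intro hc; exact absurd (hinj _ _ hk2 hk1 hc) (by omega)
      have := hsup1 _ hv hvy1
      have : sv k2 = sv a := hanti (he2 ▸ hle2) (he2 ▸ this)
      have := hinj _ _ hk2 (by omega) this
      omega
    · -- a < k1 < k2 : walk w2 (to sv k2) passes sv k1 = y1
      have hrep := conf _ w2 hw2 hsup2
      obtain ⟨v, hv, hfv⟩ := ivt_up f w2 (fun d hd => (dartlip _ w2 hrep d hd).1) k1
        (by rw [hf _ (by omega : a ≤ L)]; omega) (by rw [he2, hf _ hk2]; omega)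
      obtain ⟨kv, hkv, rfl⟩ := hrep v hv
      rw [hf _ hkv] at hfv
      rw [hfv] at hv
      have hvy2 : sv k1 ≠ y2 := by
        rw [he2]; intro hc; exact absurd (hinj _ _ hk1 hk2 hc) (by omega)
      have := hsup2 _ hv hvy2
      have : sv k1 = sv a := hanti (he1 ▸ hle1) (he1 ▸ this)
      have := hinj _ _ hk1 (by omega) this
      omega
  -- injection into Fin 3
  have hrepel : ∀ y ∈ sreach (ExG n t r r') σ.le r' (sv a), ∃ k, k ≤ L ∧ y = sv k := by
    intro y hy
    obtain ⟨hle, w, hw, hlen, hsup⟩ := hy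
    exact conf _ w hw hsup y w.end_mem_support
  have hcard : Nat.card (sreach (ExG n t r r') σ.le r' (sv a)) ≤ Nat.card (Fin 3) := by
    apply Nat.card_le_card_of_injective
      (f := fun y : (sreach (ExG n t r r') σ.le r' (sv a)) =>
        if f y.val < a then (0 : Fin 3) else if f y.val = a then 1 else 2)
    intro y1 y2 hy
    obtain ⟨k1, hk1, he1⟩ := hrepel _ y1.2
    obtain ⟨k2, hk2, he2⟩ := hrepel _ y2.2
    have hf1 : f y1.val = k1 := by rw [he1, hf _ hk1]
    have hf2 : f y2.val = k2 := by rw [he2, hf _ hk2]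
    simp only [hf1, hf2] at hy
    have hkk : k1 = k2 := by
      rcases lt_trichotomy k1 a with b1 | b1 | b1 <;> rcases lt_trichotomy k2 a with b2 | b2 | b2
      · rcases lt_trichotomy k1 k2 with h | h | h
        · exact ((cross _ y1.2 _ y2.2 k1 k2 hk1 hk2 he1 he2 (Or.inl ⟨h, b2⟩))).elim
        · exact h
        · exact ((cross _ y2.2 _ y1.2 k2 k1 hk2 hk1 he2 he1 (Or.inl ⟨h, b1⟩))).elim
      · rw [if_pos b1, if_neg (by omega), if_pos b2] at hy; exact absurd hy (by decide)
      · rw [if_pos b1, if_neg (by omega), if_neg (by omega)] at hy; exact absurd hy (by decide)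
      · rw [if_neg (by omega), if_pos b1, if_pos b2] at hy; exact absurd hy (by decide)
      · omega
      · rw [if_neg (by omega), if_pos b1, if_neg (by omega), if_neg (by omega)] at hy
        exact absurd hy (by decide)
      · rw [if_neg (by omega), if_neg (by omega), if_pos b2] at hy; exact absurd hy (by decide)
      · rw [if_neg (by omega), if_neg (by omega), if_neg (by omega), if_pos b2] at hy
        exact absurd hy (by decide)
      · rcases lt_trichotomy k1 k2 with h | h | h
        · exact ((cross _ y1.2 _ y2.2 k1 k2 hk1 hk2 he1 he2 (Or.inr ⟨by omega, h⟩))).elim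
        · exact h
        · exact ((cross _ y2.2 _ y1.2 k2 k1 hk2 hk1 he2 he1 (Or.inr ⟨by omega, h⟩))).elim
    apply Subtype.ext
    rw [he1, he2, hkk]
  simpa using hcard

end Seg

section Main
variable {n t r r' : ℕ}

lemma sreach_Z (hr : 1 ≤ r) (hrr' : r < r') (σ : LinearOrder (ExV n t r r'))
    (hXZ : ∀ (p : Idx n) (a : Fin n × Fin t), σ.lt (xV n t r r' p) (Sum.inl a))
    (hZY : ∀ (a : Fin n × Fin t)
      (w : (Idx n × Fin t × Fin (r - 1)) ⊕ (Idx n × Fin t × Fin (r' - r - 1))),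
      σ.lt (Sum.inl a) (Sum.inr (Sum.inr w)))
    (i : Fin n) (h0 : Fin t) :
    sreach (ExG n t r r') σ.le r' (zV n t r r' i h0) ⊆
      {zV n t r r' i h0} ∪
      {v | ∃ p : Idx n, (p.1.1 = i ∨ p.1.2 = i) ∧ v = xV n t r r' p} := by
  intro y hy
  obtain ⟨hle, w, hw, hlen, hsup⟩ := hy
  have hnotle : ∀ {u v : ExV n t r r'}, σ.lt u v → ¬ σ.le v u :=
    fun h => ((σ.lt_iff_le_not_ge _ _).mp h).2
  set A : Set (ExV n t r r') := {v | v = zV n t r r' i h0 ∨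
    (∃ p c, p.1.1 = i ∧ v = pIn n t r r' p h0 c) ∨
    (∃ p c, p.1.2 = i ∧ v = qIn n t r r' p h0 c)} with hA
  set B : Set (ExV n t r r') :=
    {v | ∃ p : Idx n, (p.1.1 = i ∨ p.1.2 = i) ∧ v = xV n t r r' p} with hB
  have hAB : ∀ a ∈ A, ∀ b, (ExG n t r r').Adj a b → b ∈ A ∪ B := by
    rintro a' (rfl | ⟨p, c, hp, rfl⟩ | ⟨p, c, hp, rfl⟩) b hadj
    · obtain ⟨p, hc⟩ := zV_nbr hr hrr' hadj
      rcases hc with ⟨hp, rfl⟩ | ⟨hp, rfl⟩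
      · rcases lt_or_ge 1 r with h1r | h1r
        · exact Or.inl (Or.inr (Or.inl ⟨p, _, hp, pv_mid p h0 one_ne_zero h1r⟩))
        · exact Or.inr ⟨p, Or.inl hp, pv_last p h0 one_ne_zero (by omega)⟩
      · rcases eq_or_ne (r' - r - 1) 0 with he | he
        · exact Or.inr ⟨p, Or.inr hp, by rw [he, qv_zero]⟩
        · exact Or.inl (Or.inr (Or.inr ⟨p, _, hp, qv_mid p h0 he (by omega)⟩))
    · have hc2 := c.2
      rcases pIn_nbr hr hrr' hadj with rfl | rfl
      · rcases eq_or_ne c.val 0 with he | he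
        · exact Or.inl (Or.inl (by rw [he, pv_zero, hp]))
        · exact Or.inl (Or.inr (Or.inl ⟨p, _, hp, pv_mid p h0 he (by omega)⟩))
      · rcases lt_or_ge (c.val + 2) r with hlt | hge
        · exact Or.inl (Or.inr (Or.inl ⟨p, _, hp, pv_mid p h0 (by omega) hlt⟩))
        · exact Or.inr ⟨p, Or.inl hp, pv_last p h0 (by omega) (by omega)⟩
    · have hc2 := c.2
      rcases qIn_nbr hr hrr' hadj with rfl | rfl
      · rcases eq_or_ne c.val 0 with he | he
        · exact Or.inr ⟨p, Or.inr hp, by rw [he, qv_zero]⟩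
        · exact Or.inl (Or.inr (Or.inr ⟨p, _, hp, qv_mid p h0 he (by omega)⟩))
      · rcases lt_or_ge (c.val + 2) (r' - r) with hlt | hge
        · exact Or.inl (Or.inr (Or.inr ⟨p, _, hp, qv_mid p h0 (by omega) hlt⟩))
        · exact Or.inl (Or.inl (by rw [qv_last p h0 (by omega) (by omega), hp]))
  have hend := walk_confine A B hAB w hw (Or.inl rfl) ?_ y w.end_mem_support
  · rcases hend with h | h
    · rcases h with h | ⟨p, c, hp, rfl⟩ | ⟨p, c, hp, rfl⟩
      · exact Or.inl h
      · exact absurd hle (hnotle (hZY (i, h0) (Sum.inl (p, h0, c))))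
      · exact absurd hle (hnotle (hZY (i, h0) (Sum.inr (p, h0, c))))
    · exact Or.inr h
  · rintro v hv hvy ⟨p, hp, rfl⟩
    exact hnotle (hXZ p (i, h0)) (hsup _ hv hvy)

lemma sreach_X (hn : 0 < n) (ht0 : 0 < t) (hr : 1 ≤ r) (hrr' : r < r')
    (σ : LinearOrder (ExV n t r r'))
    (hXZ : ∀ (p : Idx n) (a : Fin n × Fin t), σ.lt (xV n t r r' p) (Sum.inl a))
    (hZY : ∀ (a : Fin n × Fin t)
      (w : (Idx n × Fin t × Fin (r - 1)) ⊕ (Idx n × Fin t × Fin (r' - r - 1))),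
      σ.lt (Sum.inl a) (Sum.inr (Sum.inr w)))
    (p0 : Idx n) :
    sreach (ExG n t r r') σ.le r' (xV n t r r' p0) ⊆
      {v | ∃ p : Idx n, (p.1.1 = p0.1.1 ∨ p.1.1 = p0.1.2 ∨ p.1.2 = p0.1.1 ∨ p.1.2 = p0.1.2) ∧
        v = xV n t r r' p} := by
  intro y hy
  obtain ⟨hle, w, hw, hlen, hsup⟩ := hy
  have hnotle : ∀ {u v : ExV n t r r'}, σ.lt u v → ¬ σ.le v u :=
    fun h => ((σ.lt_iff_le_not_ge _ _).mp h).2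
  rcases y with a | y'
  · exact absurd hle (hnotle (hXZ p0 a))
  rcases y' with p | w'
  case inr.inr =>
    exfalso
    have h1 := (σ.lt_iff_le_not_ge _ _).mp (hXZ p0 (⟨0, hn⟩, ⟨0, ht0⟩))
    have h2 := (σ.lt_iff_le_not_ge _ _).mp (hZY (⟨0, hn⟩, ⟨0, ht0⟩) w')
    exact h2.2 (σ.le_trans _ _ _ hle h1.1)
  case inr.inl =>
    have hij := p0.2
    have hlipw := lip_walk (G := ExG n t r r') (fX n t r r' p0.1.1 p0.1.2)
      (fun u v h => fX_lip hr hrr' hij h) w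
    have hx0 : fX n t r r' p0.1.1 p0.1.2 (xV n t r r' p0) = 0 := by
      show fxP r r' p0.1.1 p0.1.2 p0 = 0
      simp [fxP]
    refine ⟨p, ?_, rfl⟩
    by_contra hc
    push_neg at hc
    obtain ⟨hc1, hc2, hc3, hc4⟩ := hc
    have hfar := fxP_far hr hrr' hij p hc1 hc2 hc3 hc4
    have hyv : fX n t r r' p0.1.1 p0.1.2 (Sum.inr (Sum.inl p)) = fxP r r' p0.1.1 p0.1.2 p := rfl
    omega

end Main

section Count
variable {n : ℕ}

lemma card_filter_le (P : Idx n → Prop) [DecidablePred P] (g : Idx n → Fin n)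
    (T : Finset (Fin n)) (hmap : ∀ p, P p → g p ∈ T)
    (hinj : ∀ p1 p2, P p1 → P p2 → g p1 = g p2 → p1 = p2) :
    (Finset.univ.filter P).card ≤ T.card := by
  apply Finset.card_le_card_of_injOn g
  · intro p hp
    exact hmap p (Finset.mem_filter.mp hp).2
  · intro p1 h1 p2 h2 he
    exact hinj p1 p2 (Finset.mem_filter.mp (Finset.mem_coe.mp h1)).2
      (Finset.mem_filter.mp (Finset.mem_coe.mp h2)).2 he

lemma card_erase1 (i : Fin n) : (Finset.univ.erase i).card = n - 1 := by
  rw [Finset.card_erase_of_mem (Finset.mem_univ i), Finset.card_univ, Fintype.card_fin]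

lemma card_erase2 (i j : Fin n) (hij : i ≠ j) : ((Finset.univ.erase i).erase j).card = n - 2 := by
  rw [Finset.card_erase_of_mem (Finset.mem_erase.mpr ⟨Ne.symm hij, Finset.mem_univ j⟩),
    card_erase1]
  omega

lemma card_fst_eq (i : Fin n) : (Finset.univ.filter (fun p : Idx n => p.1.1 = i)).card ≤ n - 1 := by
  rw [← card_erase1 i]
  apply card_filter_le _ (fun p => p.1.2)
  · intro p hp
    exact Finset.mem_erase.mpr ⟨fun he => p.2 (by rw [hp, he]), Finset.mem_univ _⟩
  · intro p1 p2 h1 h2 he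
    exact Subtype.ext (Prod.ext (by rw [h1, h2]) he)

lemma card_snd_eq (i : Fin n) : (Finset.univ.filter (fun p : Idx n => p.1.2 = i)).card ≤ n - 1 := by
  rw [← card_erase1 i]
  apply card_filter_le _ (fun p => p.1.1)
  · intro p hp
    exact Finset.mem_erase.mpr ⟨fun he => p.2 (by rw [hp, he]), Finset.mem_univ _⟩
  · intro p1 p2 h1 h2 he
    exact Subtype.ext (Prod.ext he (by rw [h1, h2]))

lemma card_snd_eq' (i j l : Fin n) (hij : i ≠ j) :
    (Finset.univ.filter (fun p : Idx n => p.1.2 = l ∧ p.1.1 ≠ i ∧ p.1.1 ≠ j)).card ≤ n - 2 := by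
  rw [← card_erase2 i j hij]
  apply card_filter_le _ (fun p => p.1.1)
  · intro p hp
    exact Finset.mem_erase.mpr ⟨hp.2.2, Finset.mem_erase.mpr ⟨hp.2.1, Finset.mem_univ _⟩⟩
  · intro p1 p2 h1 h2 he
    exact Subtype.ext (Prod.ext he (by rw [h1.1, h2.1]))

end Count

set_option maxHeartbeats 2000000 in
theorem example1_claim2' {n t r r' : ℕ} (ht : 4 ≤ t) (htn : t ≤ n) (hr : 1 ≤ r) (hrr' : r < r')
    (σ : LinearOrder (ExV n t r r'))
    (hXZ : ∀ (p : Idx n) (a : Fin n × Fin t), σ.lt (xV n t r r' p) (Sum.inl a))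
    (hZY : ∀ (a : Fin n × Fin t) (w : (Idx n × Fin t × Fin (r - 1)) ⊕ (Idx n × Fin t × Fin (r' - r - 1))),
      σ.lt (Sum.inl a) (Sum.inr (Sum.inr w))) :
    scolOn (ExG n t r r') σ.le r' ≤ 4 * n - 6 := by
  classical
  have hn4 : 4 ≤ n := le_trans ht htn
  have hn0 : 0 < n := by omega
  have ht0 : 0 < t := by omega
  have hXY : ∀ (p : Idx n)
      (w' : (Idx n × Fin t × Fin (r - 1)) ⊕ (Idx n × Fin t × Fin (r' - r - 1))),
      σ.lt (xV n t r r' p) (Sum.inr (Sum.inr w')) := by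
    intro p w'
    have h1 := (σ.lt_iff_le_not_ge _ _).mp (hXZ p (⟨0, hn0⟩, ⟨0, ht0⟩))
    have h2 := (σ.lt_iff_le_not_ge _ _).mp (hZY (⟨0, hn0⟩, ⟨0, ht0⟩) w')
    exact (σ.lt_iff_le_not_ge _ _).mpr
      ⟨σ.le_trans _ _ _ h1.1 h2.1, fun h3 => h1.2 (σ.le_trans _ _ _ h2.1 h3)⟩
  have tool : ∀ (s : Set (ExV n t r r')) (F : Finset (ExV n t r r')),
      s ⊆ ↑F → Nat.card s ≤ F.card := by
    intro s F hsub
    rw [Nat.card_coe_set_eq]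
    calc s.ncard ≤ (↑F : Set (ExV n t r r')).ncard :=
          Set.ncard_le_ncard hsub F.finite_toSet
      _ = F.card := Set.ncard_coe_finset F
  rw [scolOn]
  apply Finset.sup_le
  intro x _
  rcases x with ⟨i, h0⟩ | (p0 | (⟨p0, h0, c0⟩ | ⟨p0, h0, c0⟩))
  · -- Z case
    have hsub := sreach_Z hr hrr' σ hXZ hZY i h0
    set F : Finset (ExV n t r r') := insert (zV n t r r' i h0)
      ((Finset.univ.filter (fun p : Idx n => p.1.1 = i ∨ p.1.2 = i)).image (xV n t r r')) with hF
    have h1 : Nat.card (sreach (ExG n t r r') σ.le r' (Sum.inl (i, h0))) ≤ F.card := by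
      apply tool
      intro v hv
      rcases hsub hv with h | ⟨p, hp, rfl⟩
      · rw [Set.mem_singleton_iff] at h
        rw [h]
        exact Finset.mem_insert_self _ _
      · exact Finset.mem_insert_of_mem (Finset.mem_image.mpr
          ⟨p, Finset.mem_filter.mpr ⟨Finset.mem_univ _, hp⟩, rfl⟩)
    have h2 : F.card ≤ 1 + ((n - 1) + (n - 1)) := by
      refine le_trans (Finset.card_insert_le _ _) ?_
      have h3 := Finset.card_image_le (s := Finset.univ.filter (fun p : Idx n => p.1.1 = i ∨ p.1.2 = i)) (f := xV n t r r')
      have h4 : (Finset.univ.filter (fun p : Idx n => p.1.1 = i ∨ p.1.2 = i)).card ≤ (n - 1) + (n - 1) := by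
        rw [Finset.filter_or]
        refine le_trans (Finset.card_union_le _ _) ?_
        exact Nat.add_le_add (card_fst_eq i) (card_snd_eq i)
      omega
    omega
  · -- X case
    have hsub := sreach_X hn0 ht0 hr hrr' σ hXZ hZY p0
    set i := p0.1.1 with hi
    set j := p0.1.2 with hj
    have hij : i ≠ j := p0.2
    set P : Idx n → Prop := fun p => p.1.1 = i ∨ p.1.1 = j ∨ p.1.2 = i ∨ p.1.2 = j with hP
    have h1 : Nat.card (sreach (ExG n t r r') σ.le r' (Sum.inr (Sum.inl p0))) ≤
        ((Finset.univ.filter P).image (xV n t r r')).card := by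
      apply tool
      intro v hv
      obtain ⟨p, hp, rfl⟩ := hsub hv
      exact Finset.mem_image.mpr ⟨p, Finset.mem_filter.mpr ⟨Finset.mem_univ _, hp⟩, rfl⟩
    have h2 : (Finset.univ.filter P).card ≤ (n - 1) + (n - 1) + ((n - 2) + (n - 2)) := by
      have hsub2 : Finset.univ.filter P ⊆
          ((Finset.univ.filter (fun p : Idx n => p.1.1 = i) ∪
            Finset.univ.filter (fun p : Idx n => p.1.1 = j)) ∪
           (Finset.univ.filter (fun p : Idx n => p.1.2 = i ∧ p.1.1 ≠ i ∧ p.1.1 ≠ j) ∪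
            Finset.univ.filter (fun p : Idx n => p.1.2 = j ∧ p.1.1 ≠ i ∧ p.1.1 ≠ j))) := by
        intro p hp
        have hp' := (Finset.mem_filter.mp hp).2
        simp only [Finset.mem_union, Finset.mem_filter, Finset.mem_univ, true_and]
        by_cases e1 : p.1.1 = i
        · tauto
        · by_cases e2 : p.1.1 = j
          · tauto
          · rcases hp' with h | h | h | h <;> tauto
      refine le_trans (Finset.card_le_card hsub2) ?_
      refine le_trans (Finset.card_union_le _ _) ?_
      have b1 := Finset.card_union_le (Finset.univ.filter (fun p : Idx n => p.1.1 = i))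
        (Finset.univ.filter (fun p : Idx n => p.1.1 = j))
      have b2 := Finset.card_union_le
        (Finset.univ.filter (fun p : Idx n => p.1.2 = i ∧ p.1.1 ≠ i ∧ p.1.1 ≠ j))
        (Finset.univ.filter (fun p : Idx n => p.1.2 = j ∧ p.1.1 ≠ i ∧ p.1.1 ≠ j))
      have c1 := card_fst_eq i
      have c2 := card_fst_eq j
      have c3 := card_snd_eq' i j i hij
      have c4 := card_snd_eq' i j j hij
      omega
    have h3 := Finset.card_image_le (s := Finset.univ.filter P) (f := xV n t r r')
    omega
  · -- Y-P case
    have hc2 := c0.2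
    have hxe : (Sum.inr (Sum.inr (Sum.inl (p0, h0, c0))) : ExV n t r r') =
        pv n t r r' p0 h0 (c0.val + 1) := by
      rw [pv_mid p0 h0 (by omega) (by omega)]
      rfl
    rw [hxe]
    refine le_trans (sreach_seg σ (pv n t r r' p0 h0) r (c0.val + 1) (by omega) (by omega)
      (fun k l hk hl he => pv_inj hr hk hl he)
      (fun k l hk hl ha => adj_pseg hr hrr' hk hl ha)
      ?_ ?_ ?_) (by omega)
    · intro k hk0 hkL b hadj
      rw [pv_mid p0 h0 (by omega) hkL] at hadj
      rcases pIn_nbr hr hrr' hadj with rfl | rfl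
      · exact Or.inl rfl
      · right
        congr 1
        show k - 1 + 2 = k + 1
        omega
    · rw [pv_zero, pv_mid p0 h0 (by omega) (by omega)]
      exact hZY _ _
    · rw [pv_last p0 h0 (by omega) (by omega), pv_mid p0 h0 (by omega) (by omega)]
      exact hXY _ _
  · -- Y-Q case
    have hc2 := c0.2
    have hxe : (Sum.inr (Sum.inr (Sum.inr (p0, h0, c0))) : ExV n t r r') =
        qv n t r r' p0 h0 (c0.val + 1) := by
      rw [qv_mid p0 h0 (by omega) (by omega)]
      rfl
    rw [hxe]
    refine le_trans (sreach_seg σ (qv n t r r' p0 h0) (r' - r) (c0.val + 1) (by omega) (by omega)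
      (fun k l hk hl he => qv_inj (by omega) hk hl he)
      (fun k l hk hl ha => adj_qseg hr hrr' hk hl ha)
      ?_ ?_ ?_) (by omega)
    · intro k hk0 hkL b hadj
      rw [qv_mid p0 h0 (by omega) hkL] at hadj
      rcases qIn_nbr hr hrr' hadj with rfl | rfl
      · exact Or.inl rfl
      · right
        congr 1
        show k - 1 + 2 = k + 1
        omega
    · rw [qv_zero, qv_mid p0 h0 (by omega) (by omega)]
      exact hXY _ _
    · rw [qv_last p0 h0 (by omega) (by omega), qv_mid p0 h0 (by omega) (by omega)]
      exact hZY _ _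

/-- Claim 2 of Example 1: if `X <_σ Z <_σ Y` then
`scol_{r'}(G, σ) ≤ 4n - 6`. -/
theorem example1_claim2 (ht : 4 ≤ t) (htn : t ≤ n) (hr : 1 ≤ r) (hrr' : r < r')
    (σ : LinearOrder (ExV n t r r'))
    (hXZ : ∀ (p : Idx n) (a : Fin n × Fin t), σ.lt (xV n t r r' p) (Sum.inl a))
    (hZY : ∀ (a : Fin n × Fin t) (w : (Idx n × Fin t × Fin (r - 1)) ⊕ (Idx n × Fin t × Fin (r' - r - 1))),
      σ.lt (Sum.inl a) (Sum.inr (Sum.inr w))) :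
    scolOn (ExG n t r r') σ.le r' ≤ 4 * n - 6 := by
  exact example1_claim2' ht htn hr hrr' σ hXZ hZY
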